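/- Let N be an orchard network. The map σ sending each cherry reduction sequence (N_0, N_1, ..., N_s) of N (where N_{i+1} = CR(N_i, u_i)) to the word (u_0, u_1, ..., u_{s-1}) is well-defined into the set of permutations of T(int N) (i.e. the u_i are pairwise distinct and exhaust T(int N)), and σ is injective. -/

import Mathlib

open Set

namespace Phylo

variable {V : Type*}

/-- In-degree of a node in a digraph given by its edge relation. -/
noncomputable def inDeg (N : V → V → Prop) (v : V) : ℕ := {u | N u v}.ncard

/-- Out-degree of a node. -/
noncomputable def outDeg (N : V → V → Prop) (v : V) : ℕ := {w | N v w}.ncard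

/-- Reachability: existence of a directed path. -/
def Reach (N : V → V → Prop) : V → V → Prop := Relation.ReflTransGen N

/-- Leaves: nodes of out-degree 0. -/
def leaves (N : V → V → Prop) : Set V := {v | outDeg N v = 0}

/-- Internal tree nodes, i.e. the set `T(int N)`. -/
def ITN (N : V → V → Prop) : Set V := {v | inDeg N v ≤ 1 ∧ 1 ≤ outDeg N v}

/-- A (rooted) phylogenetic network structure on the digraph `N` with root `ρ`. -/
structure IsPhyloNet (N : V → V → Prop) (ρ : V) : Prop where
  acyclic : ∀ v, ¬ Relation.TransGen N v v
  root_indeg : inDeg N ρ = 0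
  root_connects : ∀ v, Reach N ρ v
  retic_out : ∀ v, 2 ≤ inDeg N v → outDeg N v = 1
  no_elementary : ∀ v, ¬ (inDeg N v = 1 ∧ outDeg N v = 1)

/-- Binarity of a phylogenetic network. -/
structure IsBinary (N : V → V → Prop) (ρ : V) : Prop where
  retic_deg : ∀ v, 2 ≤ inDeg N v → inDeg N v = 2 ∧ outDeg N v = 1
  tree_deg : ∀ v, v ≠ ρ → inDeg N v ≤ 1 → 1 ≤ outDeg N v →
      inDeg N v = 1 ∧ outDeg N v = 2
  root_deg : outDeg N ρ = 2 ∨ outDeg N ρ = 0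

/-- Tree-child: every internal node has a child of tree type (in-degree ≤ 1). -/
def IsTreeChild (N : V → V → Prop) : Prop :=
  ∀ v, 1 ≤ outDeg N v → ∃ w, N v w ∧ inDeg N w ≤ 1

/-- `u` is the tree-node root of a cherry. -/
def IsCherryRoot (N : V → V → Prop) (u : V) : Prop :=
  inDeg N u ≤ 1 ∧ ∃ x y, x ≠ y ∧ N u x ∧ N u y ∧ outDeg N x = 0 ∧ outDeg N y = 0 ∧
    ∀ w, N u w → w = x ∨ w = y

/-- `u` is the tree-node root of a reticulated cherry. -/
def IsRetCherryRoot (N : V → V → Prop) (u : V) : Prop :=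
  inDeg N u ≤ 1 ∧ ∃ h y, h ≠ y ∧ N u h ∧ N u y ∧ 2 ≤ inDeg N h ∧ outDeg N y = 0 ∧
    (∃ x, N h x ∧ outDeg N x = 0 ∧ ∀ w, N h w → w = x) ∧
    ∀ w, N u w → w = h ∨ w = y

/-- Terminal node: root of a cherry or of a reticulated cherry. -/
def IsTerminal (N : V → V → Prop) (u : V) : Prop :=
  IsCherryRoot N u ∨ IsRetCherryRoot N u

/-- Cherry reduction rooted at `u`: remove all descendant edges of `u`
(and hence all strict descendant tree nodes of `u` become isolated/removed). -/
def CR (N : V → V → Prop) (u : V) : V → V → Prop :=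
  fun a b => N a b ∧ ¬ Reach N u a

/-- `IsCRSeq N L` : `L` is the list of reduced nodes of a full cherry reduction
sequence of `N`, ending in a single-node network (no edges left). -/
def IsCRSeq : (V → V → Prop) → List V → Prop
  | N, [] => ∀ a b, ¬ N a b
  | N, u :: us => IsTerminal N u ∧ IsCRSeq (CR N u) us

/-- Orchard networks: those admitting a full cherry reduction sequence. -/
def IsOrchard (N : V → V → Prop) : Prop := ∃ L, IsCRSeq N L

/-- Underlying undirected graph of a digraph. -/
def underlying (N : V → V → Prop) : SimpleGraph V := SimpleGraph.fromRel N

/-- Cover relation of the reachability poset on internal tree nodes. -/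
def Covers (N : V → V → Prop) (u v : V) : Prop :=
  u ∈ ITN N ∧ v ∈ ITN N ∧ u ≠ v ∧ Reach N u v ∧
    ¬ ∃ z ∈ ITN N, z ≠ u ∧ z ≠ v ∧ Reach N u z ∧ Reach N z v

/-- Biconnected set of nodes of an undirected graph. -/
def IsBiconn (G : SimpleGraph V) (B : Set V) : Prop :=
  B.Nonempty ∧ (G.induce B).Preconnected ∧ ∀ v ∈ B, (G.induce (B \ {v})).Preconnected

/-- Blob: maximal biconnected component. -/
def IsBlob (G : SimpleGraph V) (B : Set V) : Prop :=
  IsBiconn G B ∧ ∀ B', IsBiconn G B' → B ⊆ B' → B' = B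

/-- Level of a network: maximum number of reticulations in a blob. -/
noncomputable def level (N : V → V → Prop) : ℕ :=
  sSup {k | ∃ B, IsBlob (underlying N) B ∧ k = (B ∩ {v | 2 ≤ inDeg N v}).ncard}

/-- `H` is a minor of `G`, presented by branch sets. -/
def IsMinorOf {α β : Type*} (H : SimpleGraph β) (G : SimpleGraph α) : Prop :=
  ∃ f : β → Set α,
    (∀ b, (f b).Nonempty) ∧
    (∀ b, (G.induce (f b)).Preconnected) ∧
    (∀ b b', b ≠ b' → Disjoint (f b) (f b')) ∧
    (∀ b b', H.Adj b b' → ∃ x ∈ f b, ∃ y ∈ f b', G.Adj x y)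

/-- A list is a linear extension of the reachability poset on `T(int N)`. -/
def IsLinExtList (N : V → V → Prop) (L : List V) : Prop :=
  L.Nodup ∧ (∀ v, v ∈ L ↔ v ∈ ITN N) ∧
  ∀ (i j : ℕ) (hi : i < L.length) (hj : j < L.length),
    Reach N (L.get ⟨i, hi⟩) (L.get ⟨j, hj⟩) → i ≤ j

/-- A list is a linear extension of the order-dual of the reachability poset. -/
def IsDualLinExtList (N : V → V → Prop) (L : List V) : Prop :=
  L.Nodup ∧ (∀ v, v ∈ L ↔ v ∈ ITN N) ∧
  ∀ (i j : ℕ) (hi : i < L.length) (hj : j < L.length),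
    Reach N (L.get ⟨j, hj⟩) (L.get ⟨i, hi⟩) → i ≤ j

end Phylo

open Phylo

section Aux

variable {V : Type*} [Fintype V]

private lemma outDeg_eq_zero_iff (N : V → V → Prop) (v : V) :
    outDeg N v = 0 ↔ ∀ w, ¬ N v w := by
  rw [outDeg, Set.ncard_eq_zero (Set.toFinite _), Set.eq_empty_iff_forall_notMem]
  rfl

private lemma one_le_outDeg_iff (N : V → V → Prop) (v : V) :
    1 ≤ outDeg N v ↔ ∃ w, N v w := by
  rw [outDeg, Nat.one_le_iff_ne_zero, Ne, Set.ncard_eq_zero (Set.toFinite _),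
    Set.eq_empty_iff_forall_notMem]
  push_neg
  rfl

private lemma terminal_child {N : V → V → Prop} {u : V} (h : IsTerminal N u) :
    ∃ w, N u w := by
  rcases h with ⟨_, x, y, _, hux, _⟩ | ⟨_, h, y, _, huh, _⟩
  · exact ⟨x, hux⟩
  · exact ⟨h, huh⟩

private lemma terminal_mem_ITN {N : V → V → Prop} {u : V} (h : IsTerminal N u) :
    u ∈ ITN N := by
  have hin : inDeg N u ≤ 1 := by rcases h with ⟨h1, _⟩ | ⟨h1, _⟩ <;> exact h1
  exact ⟨hin, (one_le_outDeg_iff N u).mpr (terminal_child h)⟩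

private lemma ITN_CR_aux (N : V → V → Prop) (u : V) (D : Set V)
    (hreach : ∀ a, Reach N u a ↔ a ∈ D)
    (hD : ∀ v ∈ D, v ≠ u → v ∉ ITN N) :
    ITN (CR N u) = ITN N \ {u} := by
  ext v
  by_cases hvD : v ∈ D
  · have hRv : Reach N u v := (hreach v).mpr hvD
    have hout0 : outDeg (CR N u) v = 0 := by
      rw [outDeg_eq_zero_iff]
      exact fun w hw => hw.2 hRv
    constructor
    · intro hv
      exact absurd hv.2 (by rw [hout0]; omega)
    · rintro ⟨hv, hvu⟩
      exact absurd hv (hD v hvD (by simpa using hvu))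
  · have hvu : v ≠ u := by
      rintro rfl
      exact hvD ((hreach v).mp Relation.ReflTransGen.refl)
    have hout : {w | CR N u v w} = {w | N v w} := by
      ext w
      exact ⟨fun h => h.1, fun h => ⟨h, fun hr => hvD ((hreach v).mp hr)⟩⟩
    have hin : {a | CR N u a v} = {a | N a v} := by
      ext a
      refine ⟨fun h => h.1, fun h => ⟨h, fun hr => ?_⟩⟩
      exact hvD ((hreach v).mp (hr.tail h))
    have h1 : inDeg (CR N u) v = inDeg N v := by rw [inDeg, inDeg, hin]
    have h2 : outDeg (CR N u) v = outDeg N v := by rw [outDeg, outDeg, hout]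
    simp only [ITN, Set.mem_setOf_eq, Set.mem_diff, Set.mem_singleton_iff, h1, h2]
    exact ⟨fun h => ⟨h, hvu⟩, fun h => h.1⟩

private lemma ITN_CR_of_terminal {N : V → V → Prop} {u : V} (h : IsTerminal N u) :
    ITN (CR N u) = ITN N \ {u} := by
  rcases h with ⟨hin, x, y, hxy, hux, huy, hx0, hy0, hall⟩ |
    ⟨hin, h, y, hhy, huh, huy, hhin, hy0, ⟨x, hhx, hx0, hxall⟩, hall⟩
  · -- cherry case
    refine ITN_CR_aux N u {u, x, y} ?_ ?_
    · intro a
      constructor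
      · intro ha
        rcases ha.cases_head with rfl | ⟨c, huc, hca⟩
        · exact Or.inl rfl
        · have hc0 : outDeg N c = 0 := by
            rcases hall c huc with rfl | rfl <;> assumption
          rcases hca.cases_head with rfl | ⟨d, hcd, _⟩
          · rcases hall c huc with rfl | rfl
            · exact Or.inr (Or.inl rfl)
            · exact Or.inr (Or.inr rfl)
          · exact absurd hcd ((outDeg_eq_zero_iff N c).mp hc0 d)
      · rintro (rfl | rfl | rfl)
        · exact Relation.ReflTransGen.refl
        · exact Relation.ReflTransGen.single hux
        · exact Relation.ReflTransGen.single huy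
    · rintro v (rfl | rfl | rfl) hvu hv
      · exact hvu rfl
      · have h2 := hv.2; rw [hx0] at h2; omega
      · have h2 := hv.2; rw [hy0] at h2; omega
  · -- reticulated cherry case
    refine ITN_CR_aux N u {u, h, y, x} ?_ ?_
    · intro a
      constructor
      · intro ha
        rcases ha.cases_head with rfl | ⟨c, huc, hca⟩
        · exact Or.inl rfl
        · rcases hall c huc with rfl | rfl
          · -- c = h
            rcases hca.cases_head with rfl | ⟨d, hcd, hda⟩
            · exact Or.inr (Or.inl rfl)
            · have : d = x := hxall d hcd
              subst this
              rcases hda.cases_head with rfl | ⟨e, hde, _⟩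
              · exact Or.inr (Or.inr (Or.inr rfl))
              · exact absurd hde ((outDeg_eq_zero_iff N d).mp hx0 e)
          · -- c = y
            rcases hca.cases_head with rfl | ⟨d, hcd, _⟩
            · exact Or.inr (Or.inr (Or.inl rfl))
            · exact absurd hcd ((outDeg_eq_zero_iff N c).mp hy0 d)
      · rintro (rfl | rfl | rfl | rfl)
        · exact Relation.ReflTransGen.refl
        · exact Relation.ReflTransGen.single huh
        · exact Relation.ReflTransGen.single huy
        · exact (Relation.ReflTransGen.single huh).tail hhx
    · rintro v (rfl | rfl | rfl | rfl) hvu hv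
      · exact hvu rfl
      · have := hv.1; omega
      · have h2 := hv.2; rw [hy0] at h2; omega
      · have h2 := hv.2; rw [hx0] at h2; omega

private lemma part1 :
    ∀ (N : V → V → Prop) (L : List V), IsCRSeq N L →
      L.Nodup ∧ (∀ v, v ∈ L ↔ v ∈ ITN N) := by
  intro N L
  induction L generalizing N with
  | nil =>
    intro hL
    refine ⟨List.nodup_nil, fun v => ?_⟩
    simp only [List.not_mem_nil, false_iff]
    intro hv
    have := hv.2
    rw [(outDeg_eq_zero_iff N v).2 (fun w => hL v w)] at this
    omega
  | cons u us ih =>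
    rintro ⟨hterm, hrest⟩
    obtain ⟨hnd, hmem⟩ := ih (CR N u) hrest
    have hITN := ITN_CR_of_terminal hterm
    have huITN : u ∈ ITN N := terminal_mem_ITN hterm
    constructor
    · refine List.nodup_cons.mpr ⟨fun hu => ?_, hnd⟩
      have := (hmem u).mp hu
      rw [hITN] at this
      exact this.2 rfl
    · intro v
      rw [List.mem_cons, hmem v, hITN]
      constructor
      · rintro (rfl | ⟨h1, _⟩)
        · exact huITN
        · exact h1
      · intro hv
        by_cases hveq : v = u
        · exact Or.inl hveq
        · exact Or.inr ⟨hv, hveq⟩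

private lemma terminal_CR_eq {N : V → V → Prop} {u v : V}
    (hac : ∀ w, ¬ Relation.TransGen N w w)
    (h1 : IsTerminal N u) (h2 : IsTerminal N v) (hE : CR N u = CR N v) :
    u = v := by
  by_contra hne
  obtain ⟨x, hux⟩ := terminal_child h1
  obtain ⟨y, hvy⟩ := terminal_child h2
  have h1' : ¬ CR N u u x := fun h => h.2 Relation.ReflTransGen.refl
  have h2' : ¬ CR N v v y := fun h => h.2 Relation.ReflTransGen.refl
  rw [hE] at h1'
  rw [← hE] at h2'
  have hvu : Reach N v u := by
    by_contra hr
    exact h1' ⟨hux, hr⟩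
  have huv : Reach N u v := by
    by_contra hr
    exact h2' ⟨hvy, hr⟩
  rcases (Relation.reflTransGen_iff_eq_or_transGen.mp huv) with rfl | htg
  · exact hne rfl
  · exact hac u (htg.trans_left hvu)

private lemma part2 :
    ∀ (N : V → V → Prop), (∀ w, ¬ Relation.TransGen N w w) →
    ∀ (L₁ L₂ : List V), IsCRSeq N L₁ → IsCRSeq N L₂ →
      List.scanl CR N L₁ = List.scanl CR N L₂ → L₁ = L₂ := by
  intro N hac L₁
  induction L₁ generalizing N with
  | nil =>
    intro L₂ _ _ he
    cases L₂ with
    | nil => rfl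
    | cons v vs =>
      have := congrArg List.length he
      simp [List.length_scanl] at this
  | cons u us ih =>
    intro L₂ h₁ h₂ he
    cases L₂ with
    | nil =>
      have := congrArg List.length he
      simp [List.length_scanl] at this
    | cons v vs =>
      simp only [List.scanl_cons, List.singleton_append, List.cons.injEq] at he
      have hhead : ∀ (M : V → V → Prop) (l : List V),
          ∃ t, List.scanl CR M l = M :: t := by
        intro M l
        cases l <;> simp [List.scanl_cons]
      obtain ⟨t₁, ht₁⟩ := hhead (CR N u) us
      obtain ⟨t₂, ht₂⟩ := hhead (CR N v) vs
      have hCReq : CR N u = CR N v := by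
        have := he.2
        rw [ht₁, ht₂] at this
        exact (List.cons.injEq _ _ _ _ ▸ this).1
      have huv : u = v := terminal_CR_eq hac h₁.1 h₂.1 hCReq
      subst huv
      have hac' : ∀ w, ¬ Relation.TransGen (CR N u) w w := fun w h =>
        hac w (Relation.TransGen.mono (fun _ _ hab => hab.1) _ _ h)
      have : us = vs := ih (CR N u) hac' vs h₁.2 (hCReq ▸ h₂.2) he.2
      rw [this]

end Aux

/-- the map σ from cherry reduction sequences to words of reduced
nodes is well-defined into the permutations of `T(int N)` and injective. -/
theorem stmt1 {V : Type*} [Fintype V] (N : V → V → Prop) (ρ : V)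
    (hphy : IsPhyloNet N ρ) (hbin : IsBinary N ρ) (horch : IsOrchard N) :
    (∀ L : List V, IsCRSeq N L → L.Nodup ∧ (∀ v, v ∈ L ↔ v ∈ ITN N)) ∧
    (∀ L₁ L₂ : List V, IsCRSeq N L₁ → IsCRSeq N L₂ →
      List.scanl CR N L₁ = List.scanl CR N L₂ → L₁ = L₂) := by
  exact ⟨fun L h => part1 N L h, fun L₁ L₂ h₁ h₂ he => part2 N hphy.acyclic L₁ L₂ h₁ h₂ he⟩
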